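/- Let U ∈ ℝ^{N×K} satisfy U'U = I_K and U = E Π F U(I,:) where E is an N×N diagonal matrix with positive diagonal, F is a K×K diagonal matrix with positive diagonal, Π ∈ ℝ^{N×K} is entrywise nonnegative with full column rank, and Π(I,:) = I_K. Then (U_*(I,:) U_*(I,:)')⁻¹ 𝟙 > 0 entrywise, where U_*(i,:) = U(i,:)/‖U(i,:)‖₂ and 𝟙 is the all-ones vector. -/

import Mathlib

open Matrix

/-- under the GoM cone structure, `(U_*(I,:) U_*(I,:)ᵀ)⁻¹ 𝟙 > 0`
entrywise, where `U_*` is the row-normalized version of `U`. -/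
theorem cone_condition {N K : ℕ}
    (U Pm : Matrix (Fin N) (Fin K) ℝ)
    (e : Fin N → ℝ) (he : ∀ i, 0 < e i)
    (f : Fin K → ℝ) (hf : ∀ k, 0 < f k)
    (hnn : ∀ i k, 0 ≤ Pm i k) (hPrank : Pm.rank = K)
    (I : Fin K → Fin N) (hI : Function.Injective I)
    (hpure : Pm.submatrix I id = 1)
    (hUo : Uᵀ * U = 1)
    (hUeq : U = Matrix.diagonal e * Pm * Matrix.diagonal f * U.submatrix I id) :
    ∀ k,
      0 < (((Matrix.of fun i j => U i j / Real.sqrt (∑ j', (U i j') ^ 2)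
              : Matrix (Fin N) (Fin K) ℝ).submatrix I id *
            ((Matrix.of fun i j => U i j / Real.sqrt (∑ j', (U i j') ^ 2)
              : Matrix (Fin N) (Fin K) ℝ).submatrix I id)ᵀ)⁻¹
            *ᵥ fun _ => (1 : ℝ)) k := by
  classical
  intro k
  set Us : Matrix (Fin N) (Fin K) ℝ :=
    Matrix.of fun i j => U i j / Real.sqrt (∑ j', (U i j') ^ 2) with hUs
  set W : Matrix (Fin K) (Fin K) ℝ := U.submatrix I id with hWdef
  set C : Matrix (Fin N) (Fin K) ℝ := Matrix.diagonal e * Pm * Matrix.diagonal f with hCdef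
  set M : Matrix (Fin K) (Fin K) ℝ := Cᵀ * C with hMdef
  have hCnn : ∀ i j, 0 ≤ C i j := by
    intro i j
    have hc : C i j = e i * Pm i j * f j := by
      simp [hCdef, Matrix.mul_diagonal, Matrix.diagonal_mul]
    rw [hc]
    exact mul_nonneg (mul_nonneg (he i).le (hnn i j)) (hf j).le
  have hM1 : Wᵀ * M * W = 1 := by
    have h2 : (C * W)ᵀ * (C * W) = Wᵀ * M * W := by
      rw [Matrix.transpose_mul (M := C) (N := W), hMdef]
      simp only [Matrix.mul_assoc]
    rw [← h2, ← hUeq, hUo]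
  have hWu : IsUnit W.det := by
    have hdet := congrArg Matrix.det hM1
    simp only [Matrix.det_mul, Matrix.det_transpose, Matrix.det_one] at hdet
    exact IsUnit.of_mul_eq_one _ (by rw [mul_assoc] at hdet; exact hdet)
  have hWinv : W⁻¹ = Wᵀ * M := Matrix.inv_eq_left_inv hM1
  have hWWM : W * Wᵀ * M = 1 := by
    rw [Matrix.mul_assoc, ← hWinv]
    exact Matrix.mul_nonsing_inv W hWu
  set d : Fin K → ℝ := fun l => Real.sqrt (∑ j', (U (I l) j') ^ 2) with hd
  have hdpos : ∀ l, 0 < d l := by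
    intro l
    have hrow : ∃ j, W l j ≠ 0 := by
      by_contra h
      push_neg at h
      exact hWu.ne_zero (Matrix.det_eq_zero_of_row_eq_zero l h)
    obtain ⟨j, hj⟩ := hrow
    apply Real.sqrt_pos.mpr
    apply Finset.sum_pos' (fun j' _ => sq_nonneg _)
    exact ⟨j, Finset.mem_univ j, by positivity⟩
  set Di : Matrix (Fin K) (Fin K) ℝ := Matrix.diagonal (fun l => (d l)⁻¹) with hDi
  set Dd : Matrix (Fin K) (Fin K) ℝ := Matrix.diagonal d with hDd
  have hUsI : Us.submatrix I id = Di * W := by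
    ext a b
    simp [hUs, hDi, hWdef, Matrix.diagonal_mul, Matrix.submatrix_apply, div_eq_inv_mul, hd]
  have hdd : Di * Dd = 1 := by
    rw [hDi, hDd, Matrix.diagonal_mul_diagonal]
    have : (fun l => (d l)⁻¹ * d l) = fun _ => (1:ℝ) := by
      funext l; exact inv_mul_cancel₀ (hdpos l).ne'
    rw [this, Matrix.diagonal_one]
  have key : (Us.submatrix I id * (Us.submatrix I id)ᵀ) * (Dd * M * Dd) = 1 := by
    rw [hUsI, Matrix.transpose_mul, Matrix.diagonal_transpose]
    simp only [Matrix.mul_assoc]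
    rw [← Matrix.mul_assoc Di Dd, hdd, Matrix.one_mul,
        ← Matrix.mul_assoc Wᵀ M Dd, ← Matrix.mul_assoc W (Wᵀ * M) Dd,
        ← Matrix.mul_assoc W Wᵀ M, hWWM, Matrix.one_mul, hdd]
  have hSinv : (Us.submatrix I id * (Us.submatrix I id)ᵀ)⁻¹ = Dd * M * Dd :=
    Matrix.inv_eq_right_inv key
  rw [hSinv]
  have hMnn : ∀ a b, 0 ≤ M a b := by
    intro a b
    rw [hMdef, Matrix.mul_apply]
    exact Finset.sum_nonneg fun i _ => mul_nonneg (hCnn i a) (hCnn i b)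
  have hMkk : 0 < M k k := by
    rcases (hMnn k k).lt_or_eq with h | h
    · exact h
    · exfalso
      have hsum : ∑ i, C i k * C i k = 0 := by
        have hmk : M k k = ∑ i, C i k * C i k := by
          rw [hMdef, Matrix.mul_apply]; rfl
        rw [← hmk, ← h]
      have hCk : ∀ i, C i k = 0 := fun i =>
        mul_self_eq_zero.mp
          ((Finset.sum_eq_zero_iff_of_nonneg (fun i _ => mul_self_nonneg (C i k))).mp
            hsum i (Finset.mem_univ i))
      have hMk : ∀ l, M l k = 0 := by
        intro l
        rw [hMdef, Matrix.mul_apply]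
        simp [hCk]
      have h1 : (W * Wᵀ * M) k k = 0 := by
        rw [Matrix.mul_apply]
        simp [hMk]
      rw [hWWM] at h1
      simp at h1
  have hentry : ∀ l, (Dd * M * Dd) k l = d k * M k l * d l := by
    intro l
    rw [hDd, Matrix.mul_diagonal, Matrix.diagonal_mul]
  simp only [Matrix.mulVec, dotProduct, mul_one]
  apply Finset.sum_pos'
  · intro l _
    rw [hentry l]
    exact mul_nonneg (mul_nonneg (hdpos k).le (hMnn k l)) (hdpos l).le
  · refine ⟨k, Finset.mem_univ k, ?_⟩
    rw [hentry k]
    exact mul_pos (mul_pos (hdpos k) hMkk) (hdpos k)
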